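/- Ski-rental regret identity for the rent-then-buy policy: Let T, b, τ, X be natural numbers with τ ≤ T and X ≤ T, where X is the number of skiing days, renting costs 1 per day and buying costs b. The offline optimal cost is min(X, b), and the policy that rents the first τ days and buys on day τ+1 if there is still snow incurs cost min(X, τ) + b·1{X ≥ τ+1}. Writing X^t = max(X − (T − t), 0) for the number of remaining skiing days when t days remain (counting day t), the regret of this policy satisfies the exact identity: (min(X, τ) + b·1{X ≥ τ+1}) − min(X, b) = Σ_{t=T−τ+1}^{T} 1{X^t > b} + (b − X^{T−τ}) · 1{1 ≤ X^{T−τ} < b}. -/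
import Mathlib


open Finset

lemma ski_sum_lemma (T b X : ℕ) : ∀ τ, τ ≤ T →
    (∑ t ∈ Finset.Icc (T - τ + 1) T, if b < X - (T - t) then (1 : ℝ) else 0)
      = ((min τ (X - b) : ℕ) : ℝ) := by
  intro τ
  induction τ with
  | zero => simp
  | succ n ih =>
    intro h
    have hn : n ≤ T := by omega
    have h1 : T - (n + 1) + 1 = T - n := by omega
    rw [h1]
    have hins : Finset.Icc (T - n) T = insert (T - n) (Finset.Icc (T - n + 1) T) := by
      rw [Finset.Icc_add_one_left_eq_Ioc, Finset.Ioc_insert_left (Nat.sub_le T n)]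
    rw [hins, Finset.sum_insert (by simp [Finset.Icc_add_one_left_eq_Ioc])]
    rw [ih hn]
    have h2 : T - (T - n) = n := by omega
    rw [h2]
    have key : min (n + 1) (X - b) = (if b < X - n then 1 else 0) + min n (X - b) := by
      split_ifs <;> omega
    rw [key]
    push_cast
    split_ifs <;> simp

/-- **Ski-rental regret identity for the rent-then-buy policy**: with `T` days, buying
cost `b`, `X ≤ T` skiing days and the policy that rents the first `τ ≤ T` days and buys on
day `τ+1` if there is still snow, the regret (online cost minus offline cost `min(X,b)`)
equals `Σ_{t=T−τ+1}^{T} 1{X^t > b} + (b − X^{T−τ})·1{1 ≤ X^{T−τ} < b}`, where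
`X^t = max(X − (T − t), 0)` is the number of remaining skiing days with `t` days to go. -/
theorem ski_rental_regret_identity
    (T b τ X : ℕ) (hτ : τ ≤ T) (hX : X ≤ T) :
    ((min X τ : ℝ) + (b : ℝ) * (if τ + 1 ≤ X then 1 else 0)) - (min X b : ℝ)
      = (∑ t ∈ Finset.Icc (T - τ + 1) T, if b < X - (T - t) then (1 : ℝ) else 0)
        + ((b : ℝ) - (X - (T - (T - τ)) : ℕ)) *
            (if 1 ≤ X - (T - (T - τ)) ∧ X - (T - (T - τ)) < b then 1 else 0) := by
  rw [ski_sum_lemma T b X τ hτ]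
  have h2 : T - (T - τ) = τ := by omega
  rw [h2]
  split_ifs with hbuy hlast hlast
  all_goals simp only [mul_one, mul_zero, add_zero]
  · have key : ((min X τ : ℕ) : ℤ) + b - min X b
        = ((min τ (X - b) : ℕ) : ℤ) + ((b : ℤ) - ((X - τ : ℕ) : ℤ)) := by omega
    exact_mod_cast key
  · have key : ((min X τ : ℕ) : ℤ) + b - min X b = ((min τ (X - b) : ℕ) : ℤ) := by omega
    exact_mod_cast key
  · have key : ((min X τ : ℕ) : ℤ) - min X b
        = ((min τ (X - b) : ℕ) : ℤ) + ((b : ℤ) - ((X - τ : ℕ) : ℤ)) := by omega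
    exact_mod_cast key
  · have key : ((min X τ : ℕ) : ℤ) - min X b = ((min τ (X - b) : ℕ) : ℤ) := by omega
    exact_mod_cast key
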